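/- arXiv:0810.2717 — 6 statements merged into one kernel-verified Lean document; each statement's English description precedes it below -/
import Mathlib

section
/- For a connected weighted graph G (all edge weights positive), every entry of Q = (I + L)^{-1} is strictly positive, where L is the Laplacian matrix of G. -/
open Matrix Finset

/-- For a connected weighted graph `G` (all edge weights positive), every entry
of `Q = (I + L)⁻¹` is strictly positive, where `L` is the Laplacian of `G`. -/
theorem stmt_2 {n : ℕ} (G : SimpleGraph (Fin n)) (hconn : G.Connected)
    (W : Matrix (Fin n) (Fin n) ℝ) (hWsym : ∀ i j, W i j = W j i)
    (hadj : ∀ i j, G.Adj i j → 0 < W i j)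
    (hnadj : ∀ i j, ¬ G.Adj i j → W i j = 0)
    (L : Matrix (Fin n) (Fin n) ℝ)
    (hL : ∀ i j, L i j = if i = j then ∑ k, W i k else - W i j) :
    ∀ i j, 0 < (1 + L)⁻¹ i j := by
  classical
  letI : NormedRing (Matrix (Fin n) (Fin n) ℝ) := Matrix.linftyOpNormedRing
  haveI : @CompleteSpace (Matrix (Fin n) (Fin n) ℝ) ‹NormedRing (Matrix (Fin n) (Fin n) ℝ)›.toUniformSpace :=
    inferInstanceAs (CompleteSpace (Fin n → Fin n → ℝ))
  set d : Fin n → ℝ := fun i => ∑ k, W i k with hd_def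
  have hW0 : ∀ a b, 0 ≤ W a b := by
    intro a b
    by_cases h : G.Adj a b
    · exact (hadj a b h).le
    · exact (hnadj a b h).ge
  have hd0 : ∀ a, 0 ≤ d a := fun a => Finset.sum_nonneg fun k _ => hW0 a k
  have hdpos : ∀ a, 0 < 1 + d a := fun a => by linarith [hd0 a]
  set B : Matrix (Fin n) (Fin n) ℝ := Matrix.of fun a b => W a b / (1 + d a) with hB_def
  have hB0 : ∀ a b, 0 ≤ B a b := fun a b => div_nonneg (hW0 a b) (hdpos a).le
  -- norm bound
  have hBnorm : ‖B‖ < 1 := by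
    rw [Matrix.linfty_opNorm_def]
    rw [show (1:ℝ) = ((1:NNReal):ℝ) by norm_num, NNReal.coe_lt_coe]
    rw [Finset.sup_lt_iff (by norm_num : (⊥ : NNReal) < 1)]
    intro a _
    rw [← NNReal.coe_lt_coe]
    push_cast
    rw [Finset.sum_congr rfl fun b _ => Real.norm_of_nonneg (hB0 a b)]
    have hsum : (∑ b, B a b) = d a / (1 + d a) := by
      simp only [hB_def, Matrix.of_apply, ← Finset.sum_div]
      rfl
    rw [hsum]
    rw [div_lt_one (hdpos a)]
    linarith
  -- factorization
  have hfact : 1 + L = Matrix.diagonal (fun a => 1 + d a) * (1 - B) := by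
    ext a b
    rw [Matrix.diagonal_mul]
    by_cases h : a = b
    · subst h
      have hWaa : W a a = 0 := hnadj a a (G.irrefl)
      simp [Matrix.one_apply, hL, hB_def, hWaa, Matrix.sub_apply]
      rfl
    · simp only [Matrix.add_apply, Matrix.one_apply_ne h, Matrix.sub_apply,
        Matrix.one_apply_ne h, hL, if_neg h, hB_def, Matrix.of_apply, zero_add, zero_sub]
      field_simp
      rw [mul_div_cancel_right₀ _ (hdpos a).ne']
  -- entry bound for the norm
  have entry_le : ∀ (M : Matrix (Fin n) (Fin n) ℝ) (a b : Fin n), ‖M a b‖ ≤ ‖M‖ := by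
    intro M a b
    have h1 : ‖M a b‖₊ ≤ ∑ k, ‖M a k‖₊ :=
      Finset.single_le_sum (f := fun k => ‖M a k‖₊) (fun _ _ => zero_le) (Finset.mem_univ b)
    have h2 : (∑ k, ‖M a k‖₊) ≤ ‖M‖₊ := by
      rw [Matrix.linfty_opNNNorm_def]
      exact Finset.le_sup (f := fun i => ∑ j, ‖M i j‖₊) (Finset.mem_univ a)
    exact_mod_cast h1.trans h2
  -- powers nonneg
  have hpow0 : ∀ (k : ℕ) (a b : Fin n), 0 ≤ (B ^ k) a b := by
    intro k
    induction k with
    | zero => intro a b; by_cases h : a = b <;> simp [Matrix.one_apply, h]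
    | succ k ih =>
      intro a b
      rw [pow_succ, Matrix.mul_apply]
      exact Finset.sum_nonneg fun m _ => mul_nonneg (ih a m) (hB0 m b)
  -- reachability gives positive power entry
  have key : ∀ (a b : Fin n) (p : G.Walk a b), ∃ k, 0 < (B ^ k) a b := by
    intro a b p
    induction p with
    | nil => exact ⟨0, by simp⟩
    | @cons a c b hac p ih =>
      obtain ⟨k, hk⟩ := ih
      refine ⟨k + 1, ?_⟩
      rw [pow_succ', Matrix.mul_apply]
      have hac' : 0 < B a c := div_pos (hadj a c hac) (hdpos a)
      have hterm : 0 < B a c * (B ^ k) c b := mul_pos hac' hk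
      have hle : B a c * (B ^ k) c b ≤ ∑ m, B a m * (B ^ k) m b :=
        Finset.single_le_sum (fun m _ => mul_nonneg (hB0 a m) (hpow0 k m b))
          (Finset.mem_univ c)
      linarith
  -- HasSum of geometric series
  have hsum : HasSum (fun k : ℕ => B ^ k) (Ring.inverse (1 - B)) :=
    hasSum_geom_series_inverse B hBnorm
  have hinv : Ring.inverse (1 - B) = (1 - B)⁻¹ := (Matrix.nonsing_inv_eq_ringInverse _).symm
  intro i j
  -- entry HasSum
  let φ : Matrix (Fin n) (Fin n) ℝ →+ ℝ :=
    { toFun := fun A => A i j, map_zero' := rfl, map_add' := fun _ _ => rfl }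
  have hφcont : Continuous φ := by
    have hlip : LipschitzWith 1 φ := by
      apply LipschitzWith.of_dist_le_mul
      intro A C
      rw [NNReal.coe_one, one_mul, dist_eq_norm, dist_eq_norm]
      calc ‖φ A - φ C‖ = ‖(A - C) i j‖ := by simp [φ, Matrix.sub_apply]; rfl
        _ ≤ ‖A - C‖ := entry_le _ i j
    exact hlip.continuous
  have hent : HasSum (fun k : ℕ => (B ^ k) i j) ((1 - B)⁻¹ i j) := by
    have := hsum.map φ hφcont
    rw [hinv] at this
    exact this
  obtain ⟨m, hm⟩ := key i j (hconn.preconnected i j).some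
  have hSpos : 0 < (1 - B)⁻¹ i j :=
    lt_of_lt_of_le hm (le_hasSum hent m fun k _ => hpow0 k i j)
  -- compute the inverse entry
  have hDinv : (Matrix.diagonal fun a => 1 + d a)⁻¹ = Matrix.diagonal fun a => (1 + d a)⁻¹ := by
    apply Matrix.inv_eq_right_inv
    rw [Matrix.diagonal_mul_diagonal,
      show (fun a => (1 + d a) * (1 + d a)⁻¹) = fun _ => (1:ℝ) from
        funext fun a => mul_inv_cancel₀ (hdpos a).ne', Matrix.diagonal_one]
  have hQ : (1 + L)⁻¹ = (1 - B)⁻¹ * Matrix.diagonal (fun a => (1 + d a)⁻¹) := by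
    rw [hfact, Matrix.mul_inv_rev, hDinv]
  rw [hQ, Matrix.mul_diagonal]
  exact mul_pos hSpos (inv_pos.mpr (hdpos j))
end

section
/- The matrix Q = (I + L)^{-1} of a weighted graph is symmetric and doubly stochastic: Q·1 = 1 and each row sums to 1, and entries of Q lie in [0,1] for connected G with positive weights. -/
open Matrix Finset

attribute [local instance] Matrix.linftyOpNormedRing Matrix.linftyOpNormedAlgebra

/-- The matrix `Q = (I + L)⁻¹` of a weighted graph is symmetric and doubly
stochastic: `Q·1 = 1` and each row sums to `1`, and the entries of `Q` lie in
`[0,1]` for connected `G` with positive weights. -/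
theorem stmt_3 {n : ℕ} (G : SimpleGraph (Fin n)) (hconn : G.Connected)
    (W : Matrix (Fin n) (Fin n) ℝ) (hWsym : ∀ i j, W i j = W j i)
    (hadj : ∀ i j, G.Adj i j → 0 < W i j)
    (hnadj : ∀ i j, ¬ G.Adj i j → W i j = 0)
    (L : Matrix (Fin n) (Fin n) ℝ)
    (hL : ∀ i j, L i j = if i = j then ∑ k, W i k else - W i j)
    (Q : Matrix (Fin n) (Fin n) ℝ) (hQ : Q = (1 + L)⁻¹) :
    Qᵀ = Q ∧ Q *ᵥ (fun _ => (1 : ℝ)) = (fun _ => (1 : ℝ)) ∧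
      (∀ i, ∑ j, Q i j = 1) ∧ ∀ i j, Q i j ∈ Set.Icc (0 : ℝ) 1 := by
  classical
  have hW0 : ∀ i j, 0 ≤ W i j := by
    intro i j
    by_cases h : G.Adj i j
    · exact (hadj i j h).le
    · exact (hnadj i j h).ge
  have hWii : ∀ i, W i i = 0 := fun i => hnadj i i (G.loopless.irrefl i)
  set d : Fin n → ℝ := fun i => ∑ k, W i k with hd
  have hd0 : ∀ i, 0 ≤ d i := fun i => Finset.sum_nonneg fun j _ => hW0 i j
  set c : ℝ := 1 + ∑ i, d i with hcdef
  have hdc : ∀ i, 1 + d i ≤ c := by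
    intro i
    have h1 : d i ≤ ∑ i, d i := Finset.single_le_sum (fun j _ => hd0 j) (mem_univ i)
    simp only [hcdef]; linarith
  have hc1 : (1 : ℝ) ≤ c := by
    have h1 : 0 ≤ ∑ i, d i := Finset.sum_nonneg fun j _ => hd0 j
    simp only [hcdef]; linarith
  have hcpos : (0 : ℝ) < c := lt_of_lt_of_le one_pos hc1
  have hcinv : (0 : ℝ) < c⁻¹ := inv_pos.2 hcpos
  set A : Matrix (Fin n) (Fin n) ℝ := 1 + L with hA
  have hAentry : ∀ i j, A i j = if i = j then 1 + d i else -W i j := by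
    intro i j
    by_cases h : i = j <;>
      simp [hA, Matrix.add_apply, Matrix.one_apply, hL, h, hd]
  have hArow : ∀ i, ∑ j, A i j = 1 := by
    intro i
    have h1 : ∀ j, A i j = (if i = j then 1 + d i + W i j else 0) - W i j := by
      intro j
      rw [hAentry]
      by_cases h : i = j
      · subst h; simp
      · simp [h]
    simp_rw [h1, Finset.sum_sub_distrib, Finset.sum_ite_eq, if_pos (mem_univ i)]
    simp [hd, hWii i]
  have hAone : A *ᵥ (fun _ => (1 : ℝ)) = fun _ => 1 := by
    funext i
    simp [Matrix.mulVec, dotProduct, hArow i]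
  set P : Matrix (Fin n) (Fin n) ℝ := 1 - c⁻¹ • A with hPdef
  have hPentry : ∀ i j, P i j = (if i = j then 1 else 0) - c⁻¹ * A i j := by
    intro i j
    simp [hPdef, Matrix.sub_apply, Matrix.smul_apply, Matrix.one_apply, smul_eq_mul]
  have hP0 : ∀ i j, 0 ≤ P i j := by
    intro i j
    rw [hPentry, hAentry]
    by_cases h : i = j
    · subst h
      have h1 : c⁻¹ * (1 + d i) ≤ c⁻¹ * c :=
        mul_le_mul_of_nonneg_left (hdc i) hcinv.le
      rw [inv_mul_cancel₀ (ne_of_gt hcpos)] at h1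
      simp
      linarith
    · have h2 : 0 ≤ c⁻¹ * W i j := mul_nonneg hcinv.le (hW0 i j)
      simp [h]
      linarith
  have hProw : ∀ i, ∑ j, P i j = 1 - c⁻¹ := by
    intro i
    simp_rw [hPentry, Finset.sum_sub_distrib, Finset.sum_ite_eq, if_pos (mem_univ i),
      ← Finset.mul_sum, hArow i, mul_one]
  have hnorm : ‖P‖ < 1 := by
    rw [linfty_opNorm_def]
    have key : ∀ i, ∑ j, ‖P i j‖ = 1 - c⁻¹ := by
      intro i
      rw [← hProw i]
      exact Finset.sum_congr rfl fun j _ => Real.norm_of_nonneg (hP0 i j)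
    have hlt : (1 : ℝ) - c⁻¹ < 1 := by linarith
    have hsup : ((Finset.univ : Finset (Fin n)).sup fun i => ∑ j, ‖P i j‖₊ : NNReal) < 1 := by
      apply Finset.sup_lt_iff (by norm_num : (⊥ : NNReal) < 1) |>.2
      intro i _
      have h2 : ((∑ j, ‖P i j‖₊ : NNReal) : ℝ) < 1 := by
        push_cast
        simpa [← Real.norm_eq_abs, key i] using hlt
      exact_mod_cast h2
    exact_mod_cast hsup
  have hu : IsUnit ((1 : Matrix (Fin n) (Fin n) ℝ) - P) := (Units.oneSub P hnorm).isUnit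
  have hAc : A = (c • (1 : Matrix (Fin n) (Fin n) ℝ)) * ((1 : Matrix (Fin n) (Fin n) ℝ) - P) := by
    rw [hPdef, sub_sub_cancel, smul_mul_assoc, one_mul, smul_smul,
      mul_inv_cancel₀ (ne_of_gt hcpos), one_smul]
  have hscalinv : (c • (1 : Matrix (Fin n) (Fin n) ℝ)) * (c⁻¹ • 1) = 1 := by
    rw [smul_mul_assoc, one_mul, smul_smul, mul_inv_cancel₀ (ne_of_gt hcpos), one_smul]
  have hc1unit : IsUnit (c • (1 : Matrix (Fin n) (Fin n) ℝ)) := by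
    apply (Matrix.isUnit_iff_isUnit_det _).2
    rw [Matrix.det_smul, Matrix.det_one, mul_one]
    exact (isUnit_iff_ne_zero).2 (pow_ne_zero _ (ne_of_gt hcpos))
  have hAunit : IsUnit A := hAc ▸ hc1unit.mul hu
  have hAdet : IsUnit A.det := (Matrix.isUnit_iff_isUnit_det A).1 hAunit
  have hQA : Q * A = 1 := by rw [hQ]; exact Matrix.nonsing_inv_mul A hAdet
  have hQform : Q = c⁻¹ • ((1 : Matrix (Fin n) (Fin n) ℝ) - P)⁻¹ := by
    rw [hQ, hAc, Matrix.mul_inv_rev,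
      Matrix.inv_eq_right_inv hscalinv, mul_smul_comm, mul_one]
  have hpow : ∀ (k : ℕ) (i j : Fin n), 0 ≤ (P ^ k) i j := by
    intro k
    induction k with
    | zero =>
        intro i j
        by_cases h : i = j <;> simp [Matrix.one_apply, h]
    | succ m ih =>
        intro i j
        rw [pow_succ, Matrix.mul_apply]
        exact Finset.sum_nonneg fun l _ => mul_nonneg (ih i l) (hP0 l j)
  have hinv0 : ∀ i j, 0 ≤ ((1 : Matrix (Fin n) (Fin n) ℝ) - P)⁻¹ i j := by
    intro i j
    have hsum : ((1 : Matrix (Fin n) (Fin n) ℝ) - P)⁻¹ = ∑' k : ℕ, P ^ k := by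
      rw [Matrix.nonsing_inv_eq_ringInverse, NormedRing.inverse_one_sub P hnorm]
      rfl
    rw [hsum]
    have hs := (summable_geometric_of_norm_lt_one hnorm).hasSum
    have he : HasSum (fun k : ℕ => (P ^ k) i j) ((∑' k : ℕ, P ^ k) i j) :=
      hs.map (AddMonoidHom.mk' (fun B : Matrix (Fin n) (Fin n) ℝ => B i j) (fun a b => rfl))
        ((continuous_apply j).comp (continuous_apply i))
    rw [← he.tsum_eq]
    exact tsum_nonneg fun k => hpow k i j
  have hQ0 : ∀ i j, 0 ≤ Q i j := by
    intro i j
    rw [hQform]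
    simpa [Matrix.smul_apply, smul_eq_mul] using mul_nonneg hcinv.le (hinv0 i j)
  have hQone : Q *ᵥ (fun _ => (1 : ℝ)) = fun _ => 1 := by
    conv_lhs => rw [← hAone]
    rw [Matrix.mulVec_mulVec, hQA, Matrix.one_mulVec]
  have hQrow : ∀ i, ∑ j, Q i j = 1 := by
    intro i
    have h1 := congrFun hQone i
    simpa [Matrix.mulVec, dotProduct] using h1
  have hAsymm : Aᵀ = A := by
    ext i j
    rw [Matrix.transpose_apply, hAentry, hAentry]
    by_cases h : i = j
    · subst h; simp
    · simp [h, Ne.symm h, hWsym j i]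
  have hQsymm : Qᵀ = Q := by
    rw [hQ, Matrix.transpose_nonsing_inv, hAsymm]
  have hQle : ∀ i j, Q i j ≤ 1 := by
    intro i j
    calc Q i j ≤ ∑ k, Q i k := Finset.single_le_sum (fun k _ => hQ0 i k) (mem_univ j)
      _ = 1 := hQrow i
  exact ⟨hQsymm, hQone, hQrow, fun i j => ⟨hQ0 i j, hQle i j⟩⟩
end

section
/- For a connected weighted graph with Laplacian L, for any α ≠ 0, the Moore–Penrose inverse satisfies L⁺ = (L + αJ̄)^{-1} − α^{-1}J̄, where J̄ is the matrix with all entries 1/n. -/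
open Matrix

/-- For a connected weighted graph with Laplacian `L`, for any `α ≠ 0`, the
Moore–Penrose inverse satisfies `L⁺ = (L + αJ̄)⁻¹ − α⁻¹J̄`, where `J̄` is the
matrix with all entries `1/n`. -/
theorem stmt_9 {n : ℕ} (hn : 0 < n) (L : Matrix (Fin n) (Fin n) ℝ)
    (hpsd : L.PosSemidef)
    (h1 : L *ᵥ (fun _ => (1 : ℝ)) = 0)
    (hker : ∀ v : Fin n → ℝ, L *ᵥ v = 0 → ∃ c : ℝ, v = fun _ => c)
    (P : Matrix (Fin n) (Fin n) ℝ)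
    (hP1 : L * P * L = L) (hP2 : P * L * P = P)
    (hP3 : (L * P).IsHermitian) (hP4 : (P * L).IsHermitian)
    (J : Matrix (Fin n) (Fin n) ℝ) (hJ : J = Matrix.of fun _ _ => (n : ℝ)⁻¹)
    (α : ℝ) (hα : α ≠ 0) :
    P = (L + α • J)⁻¹ - α⁻¹ • J := by
  have hn' : (n : ℝ) ≠ 0 := Nat.cast_ne_zero.mpr hn.ne'
  set u : Fin n → ℝ := fun _ => (1 : ℝ) with hu
  have hLsym : Lᵀ = L := by
    have := hpsd.isHermitian.eq
    simpa [Matrix.conjTranspose_eq_transpose_of_trivial, Matrix.transpose] using this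
  have hLP : Pᵀ * L = L * P := by
    have := hP3.eq
    rw [Matrix.conjTranspose_mul] at this
    simpa [Matrix.conjTranspose_eq_transpose_of_trivial, hLsym] using this
  have hPL : L * Pᵀ = P * L := by
    have := hP4.eq
    rw [Matrix.conjTranspose_mul] at this
    simpa [Matrix.conjTranspose_eq_transpose_of_trivial, hLsym] using this
  -- P *ᵥ u = 0
  have hLPu : L *ᵥ (P *ᵥ u) = 0 := by
    rw [Matrix.mulVec_mulVec, ← hLP, ← Matrix.mulVec_mulVec, h1, Matrix.mulVec_zero]
  have hPu : P *ᵥ u = 0 := by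
    calc P *ᵥ u = (P * L * P) *ᵥ u := by rw [hP2]
    _ = P *ᵥ (L *ᵥ (P *ᵥ u)) := by rw [Matrix.mulVec_mulVec, Matrix.mulVec_mulVec]
    _ = 0 := by rw [hLPu, Matrix.mulVec_zero]
  -- Pᵀ *ᵥ u = 0
  have hLPtu : L *ᵥ (Pᵀ *ᵥ u) = 0 := by
    rw [Matrix.mulVec_mulVec, hPL, ← Matrix.mulVec_mulVec, h1, Matrix.mulVec_zero]
  have hPtu : Pᵀ *ᵥ u = 0 := by
    have h2t : Pᵀ * L * Pᵀ = Pᵀ := by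
      have := congrArg Matrix.transpose hP2
      simpa [Matrix.transpose_mul, hLsym, Matrix.mul_assoc] using this
    calc Pᵀ *ᵥ u = (Pᵀ * L * Pᵀ) *ᵥ u := by rw [h2t]
    _ = Pᵀ *ᵥ (L *ᵥ (Pᵀ *ᵥ u)) := by rw [Matrix.mulVec_mulVec, Matrix.mulVec_mulVec]
    _ = 0 := by rw [hLPtu, Matrix.mulVec_zero]
  -- basic J facts
  have hLJ : L * J = 0 := by
    ext i j
    have := congrFun h1 i
    simp only [Matrix.mulVec, dotProduct, hu, mul_one, Pi.zero_apply] at this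
    simp [hJ, Matrix.mul_apply, ← Finset.sum_mul, this]
  have hJL : J * L = 0 := by
    ext i j
    have := congrFun h1 j
    simp only [Matrix.mulVec, dotProduct, hu, mul_one, Pi.zero_apply] at this
    have hsum : ∑ k, L k j = 0 := by
      rw [← this]
      exact Finset.sum_congr rfl fun k _ => by
        conv_lhs => rw [← hLsym, Matrix.transpose_apply]
    simp [hJ, Matrix.mul_apply, ← Finset.mul_sum, hsum]
  have hJP : J * P = 0 := by
    ext i j
    have := congrFun hPtu j
    simp only [Matrix.mulVec, dotProduct, hu, mul_one, Pi.zero_apply,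
      Matrix.transpose_apply] at this
    simp [hJ, Matrix.mul_apply, ← Finset.mul_sum, this]
  have hJJ : J * J = J := by
    ext i j
    simp [hJ, Matrix.mul_apply, Finset.sum_const, Finset.card_univ]
    field_simp
  have hJu : J *ᵥ u = u := by
    ext i
    simp [hJ, Matrix.mulVec, dotProduct, hu, Finset.sum_const, Finset.card_univ]
    field_simp
  -- L * P + J = 1
  have hJt : Jᵀ = J := by ext i j; simp [hJ, Matrix.transpose]
  have hLPt : (L * P)ᵀ = L * P := by rw [Matrix.transpose_mul, hLsym, hLP]
  set M : Matrix (Fin n) (Fin n) ℝ := 1 - L * P - J with hM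
  have hMt : Mᵀ = M := by
    rw [hM]
    simp [Matrix.transpose_sub, hLPt, hJt]
  have hML : M * L = 0 := by
    rw [hM]
    simp [Matrix.sub_mul, hP1, hJL]
  have hLM : L * M = 0 := by
    have := congrArg Matrix.transpose hML
    rw [Matrix.transpose_mul, hLsym, hMt] at this
    simpa using this
  have hMu : M *ᵥ u = 0 := by
    rw [hM]
    rw [Matrix.sub_mulVec, Matrix.sub_mulVec, Matrix.one_mulVec, hJu,
      ← Matrix.mulVec_mulVec, hPu, Matrix.mulVec_zero]
    simp
  have hMzero : M = 0 := by
    ext i j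
    -- column j of M is constant
    have hcol : L *ᵥ (fun k => M k j) = 0 := by
      ext i'
      have := congrFun (congrFun hLM i') j
      simpa [Matrix.mul_apply, Matrix.mulVec, dotProduct] using this
    obtain ⟨c, hc⟩ := hker _ hcol
    have hcj : ∀ k, M k j = c := fun k => congrFun hc k
    -- row j of M is also constant c (symmetry), so n * c = 0
    have hrow : ∀ i', M j i' = c := by
      intro i'
      rw [← hMt]
      exact hcj i'
    have : (M *ᵥ u) j = (n : ℝ) * c := by
      simp [Matrix.mulVec, dotProduct, hu, hrow, Finset.sum_const, Finset.card_univ,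
        mul_comm]
    rw [hMu] at this
    have hc0 : c = 0 := by
      have h0 : (0 : ℝ) = (n : ℝ) * c := by simpa using this
      rcases mul_eq_zero.mp h0.symm with h | h
      · exact absurd h hn'
      · exact h
    simp [hcj i, hc0]
  have hone : L * P + J = 1 := by
    have h0 : (1 : Matrix (Fin n) (Fin n) ℝ) - (L * P + J) = 0 := by
      rw [← sub_sub, ← hM]; exact hMzero
    exact (sub_eq_zero.mp h0).symm
  have hinv : (L + α • J) * (P + α⁻¹ • J) = 1 := by
    rw [Matrix.add_mul, Matrix.mul_add, Matrix.mul_add, Matrix.smul_mul, Matrix.mul_smul,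
      Matrix.smul_mul, Matrix.mul_smul, hLJ, hJP, hJJ, smul_zero, smul_zero, smul_smul,
      mul_inv_cancel₀ hα, one_smul]
    simpa using hone
  have hInv := Matrix.inv_eq_right_inv hinv
  rw [hInv]
  abel
end

section
/- Let Q_α = (I + αL)^{-1} for the Laplacian L of a connected weighted graph. Then for each pair i ≠ j, as α → 0⁺, (I + αL)^{-1}_{ij} = f_ij^{(m)} α^m + o(α^m), where m is the smallest number of edges of a spanning rooted forest in which i is in the tree rooted at j; equivalently, log_α (Q_α)_{ij} → m as α → 0⁺. In particular, for unit edge weights m equals the shortest-path distance between i and j. -/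
open Matrix Filter Finset Topology

/-- Let `Q_α = (I + αL)⁻¹` for the Laplacian `L` of a connected weighted graph.
By the matrix forest theorem, `(Q_α)_ij = f_ij(α)/f(α)` with
`f_ij(α) = Σ_p f_ij^{(p)} α^p` (the coefficients `a`) and `f(α)` (the
coefficients `b`, with `b 0 = 1`), where `f_ij^{(p)} = 0` for `p < m` and
`f_ij^{(m)} > 0`, `m` being the smallest number of edges of a spanning rooted
forest in which `i` is in the tree rooted at `j` (for unit weights, the
shortest-path distance).  Then `log_α (Q_α)_ij → m` as `α → 0⁺`. -/
theorem stmt_11 {n : ℕ} (L : Matrix (Fin n) (Fin n) ℝ) (i j : Fin n)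
    (hij : i ≠ j) (N m : ℕ) (hmN : m ≤ N) (a b : ℕ → ℝ)
    (ha : ∀ k, 0 ≤ a k) (ham : 0 < a m) (halow : ∀ k, k < m → a k = 0)
    (hb : ∀ k, 0 ≤ b k) (hb0 : b 0 = 1)
    (hmft : ∀ α : ℝ, 0 < α →
      (1 + α • L)⁻¹ i j =
        (∑ k ∈ Finset.range (N + 1), a k * α ^ k) /
        (∑ k ∈ Finset.range (N + 1), b k * α ^ k)) :
    Tendsto (fun α : ℝ => Real.log ((1 + α • L)⁻¹ i j) / Real.log α)
      (nhdsWithin 0 (Set.Ioi 0)) (nhds (m : ℝ)) := by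
  set h : ℝ → ℝ := fun α => ∑ k ∈ Finset.range (N - m + 1), a (m + k) * α ^ k with hh
  set d : ℝ → ℝ := fun α => ∑ k ∈ Finset.range (N + 1), b k * α ^ k with hd
  have hcont_h : Continuous h := by fun_prop
  have hcont_d : Continuous d := by fun_prop
  have hh0 : h 0 = a m := by
    simp [hh, Finset.sum_range_succ']
  have hd0 : d 0 = 1 := by
    simp [hd, Finset.sum_range_succ', hb0]
  -- factorization
  have hfact : ∀ α : ℝ, (∑ k ∈ Finset.range (N + 1), a k * α ^ k) = α ^ m * h α := by
    intro α
    have h1 : (∑ k ∈ Finset.range (N + 1), a k * α ^ k)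
        = ∑ k ∈ Finset.Ico m (N + 1), a k * α ^ k := by
      rw [Finset.range_eq_Ico, ← Finset.sum_Ico_consecutive _ (Nat.zero_le m) (by omega)]
      have : (∑ k ∈ Finset.Ico 0 m, a k * α ^ k) = 0 := by
        apply Finset.sum_eq_zero
        intro k hk
        simp at hk
        rw [halow k hk, zero_mul]
      rw [this, zero_add]
    rw [h1, Finset.sum_Ico_eq_sum_range]
    have : N + 1 - m = N - m + 1 := by omega
    rw [this, Finset.mul_sum]
    apply Finset.sum_congr rfl
    intro k _
    rw [pow_add]; ring
  -- tendsto of h and d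
  have hth : Tendsto h (𝓝[>] (0:ℝ)) (𝓝 (a m)) := by
    rw [← hh0]
    exact (hcont_h.tendsto 0).mono_left nhdsWithin_le_nhds
  have htd : Tendsto d (𝓝[>] (0:ℝ)) (𝓝 1) := by
    rw [← hd0]
    exact (hcont_d.tendsto 0).mono_left nhdsWithin_le_nhds
  have hev_h : ∀ᶠ α in 𝓝[>] (0:ℝ), 0 < h α := hth.eventually (eventually_gt_nhds ham)
  have hev_d : ∀ᶠ α in 𝓝[>] (0:ℝ), 0 < d α := htd.eventually (eventually_gt_nhds one_pos)
  have hev_mem : ∀ᶠ α in 𝓝[>] (0:ℝ), α ∈ Set.Ioo (0:ℝ) 1 :=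
    Ioo_mem_nhdsGT_of_mem ⟨le_refl 0, one_pos⟩
  have hloginv : Tendsto (fun α : ℝ => (Real.log α)⁻¹) (𝓝[>] (0:ℝ)) (𝓝 0) := by
    have h1 : Tendsto (fun α : ℝ => (-Real.log α)⁻¹) (𝓝[>] (0:ℝ)) (𝓝 0) :=
      tendsto_inv_atTop_zero.comp
        (tendsto_neg_atBot_atTop.comp Real.tendsto_log_nhdsGT_zero)
    simpa [inv_neg] using h1.neg
  have key : Tendsto (fun α : ℝ => (m : ℝ) + (Real.log (h α) - Real.log (d α)) * (Real.log α)⁻¹)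
      (𝓝[>] (0:ℝ)) (𝓝 (m : ℝ)) := by
    have : Tendsto (fun α : ℝ => (Real.log (h α) - Real.log (d α)) * (Real.log α)⁻¹)
        (𝓝[>] (0:ℝ)) (𝓝 0) := by
      have h1 : Tendsto (fun α : ℝ => Real.log (h α) - Real.log (d α)) (𝓝[>] (0:ℝ))
          (𝓝 (Real.log (a m) - Real.log 1)) :=
        ((Real.continuousAt_log ham.ne').tendsto.comp hth).sub
          ((Real.continuousAt_log one_ne_zero).tendsto.comp htd)
      simpa using h1.mul hloginv
    simpa using (tendsto_const_nhds.add this)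
  apply key.congr'
  filter_upwards [hev_h, hev_d, hev_mem] with α hhα hdα hα
  obtain ⟨hα0, hα1⟩ := hα
  have hlogα : Real.log α < 0 := Real.log_neg hα0 hα1
  rw [hmft α hα0, hfact α, Real.log_div (by positivity) hdα.ne',
    Real.log_mul (by positivity) hhα.ne', Real.log_pow]
  rw [show (↑m * Real.log α + Real.log (h α) - Real.log (d α))
      = ↑m * Real.log α + (Real.log (h α) - Real.log (d α)) by ring,
    add_div, mul_div_cancel_right₀ _ hlogα.ne, div_eq_mul_inv]
end

section
/- With the scaling γ = ln(e + α^{2/n}) and weight transformation w ↦ αw, the logarithmic forest distance d_α(i,j) = γ(α−1) log_α (√(f_ii(α) f_jj(α)) / f_ij(α)) converges, as α → ∞, to the resistance distance d^r(i,j) = (f_ii^{(n-2)} + f_jj^{(n-2)} − 2 f_ij^{(n-2)})/(n t). -/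
open Filter Finset Topology

private lemma phi_tendsto :
    Tendsto (fun x : ℝ => if x = 0 then 1 else Real.log (1 + x) / x) (nhds 0) (nhds 1) := by
  have hd : HasDerivAt Real.log 1 1 := by
    simpa using Real.hasDerivAt_log one_ne_zero
  have hs := hasDerivAt_iff_tendsto_slope.mp hd
  have hmap : Tendsto (fun x : ℝ => 1 + x) (nhdsWithin 0 {(0:ℝ)}ᶜ) (nhdsWithin 1 {(1:ℝ)}ᶜ) := by
    apply tendsto_nhdsWithin_of_tendsto_nhds_of_eventually_within
    · have : Tendsto (fun x : ℝ => 1 + x) (nhds 0) (nhds (1 + 0)) :=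
        (continuous_const.add continuous_id).tendsto 0
      simpa using this.mono_left nhdsWithin_le_nhds
    · filter_upwards [self_mem_nhdsWithin] with x hx
      simp only [Set.mem_compl_iff, Set.mem_singleton_iff] at hx ⊢
      intro h; exact hx (by linarith)
  have hcomp : Tendsto (fun x : ℝ => Real.log (1 + x) / x) (nhdsWithin 0 {(0:ℝ)}ᶜ) (nhds 1) := by
    have := hs.comp hmap
    refine this.congr ?_
    intro x
    simp [slope, Real.log_one, div_eq_inv_mul]
  rw [← nhdsNE_sup_pure (0:ℝ)]
  rw [tendsto_sup]
  constructor
  · refine Tendsto.congr' ?_ hcomp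
    filter_upwards [self_mem_nhdsWithin] with x hx
    simp only [Set.mem_compl_iff, Set.mem_singleton_iff] at hx
    simp [hx]
  · have : (fun x : ℝ => if x = 0 then 1 else Real.log (1 + x) / x) 0 = 1 := by simp
    simpa [this] using tendsto_pure_nhds (fun x : ℝ => if x = 0 then 1 else Real.log (1 + x) / x) 0

private lemma mul_log_one_add {g : ℝ → ℝ} {a : ℝ} (h0 : Tendsto g atTop (nhds 0))
    (h1 : Tendsto (fun α => α * g α) atTop (nhds a)) :
    Tendsto (fun α => α * Real.log (1 + g α)) atTop (nhds a) := by
  have hφ : Tendsto (fun α => if g α = 0 then 1 else Real.log (1 + g α) / g α) atTop (nhds 1) :=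
    phi_tendsto.comp h0
  have h := h1.mul hφ
  rw [mul_one] at h
  refine h.congr fun α => ?_
  by_cases hg : g α = 0
  · simp [hg]
  · rw [if_neg hg]; field_simp

private lemma sum_tendsto (m : ℕ) (hm : 1 ≤ m) (c : ℕ → ℝ) :
    Tendsto (fun α : ℝ => α * ((∑ p ∈ range (m+1), c p * α ^ p) / α ^ m - c m)) atTop
      (nhds (c (m-1))) := by
  have key : Tendsto (fun α : ℝ => ∑ p ∈ range m, c p * α ^ ((p:ℤ) + 1 - m)) atTop
      (nhds (∑ p ∈ range m, if p = m - 1 then c p else 0)) := by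
    apply tendsto_finset_sum
    intro p hp
    rcases eq_or_ne p (m-1) with h | h
    · rw [if_pos h, h]
      have he : ((m-1:ℕ):ℤ) + 1 - m = 0 := by omega
      rw [he]
      simpa using (tendsto_const_nhds : Tendsto (fun _ : ℝ => c (m-1)) atTop _)
    · rw [if_neg h]
      have hp' : p < m := mem_range.mp hp
      have he : (p:ℤ) + 1 - m < 0 := by omega
      have h0 := tendsto_zpow_atTop_zero (𝕜 := ℝ) he
      simpa using (tendsto_const_nhds (x := c p)).mul h0
  rw [Finset.sum_ite_eq' (range m) (m-1) c, if_pos (mem_range.mpr (by omega))] at key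
  refine key.congr' ?_
  filter_upwards [eventually_gt_atTop (0:ℝ)] with α hα
  rw [Finset.sum_range_succ]
  rw [add_div, add_sub_assoc]
  have hαm : (α:ℝ) ^ m ≠ 0 := pow_ne_zero _ hα.ne'
  rw [mul_div_assoc, div_self hαm, mul_one, sub_self, add_zero, Finset.sum_div, Finset.mul_sum]
  apply Finset.sum_congr rfl
  intro p hp
  have hp' : p < m := mem_range.mp hp
  rw [zpow_sub₀ hα.ne', zpow_add₀ hα.ne', zpow_natCast, zpow_natCast, zpow_one]
  field_simp

private lemma pair_lemma (m : ℕ) (hm : 1 ≤ m) (t : ℝ) (ht : 0 < t) (c : ℕ → ℝ) (hc : c m = t) :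
    Tendsto (fun α : ℝ => α * Real.log ((∑ p ∈ range (m+1), c p * α ^ p) / (t * α ^ m))) atTop
      (nhds (c (m-1) / t)) := by
  set S : ℝ → ℝ := fun α => ∑ p ∈ range (m+1), c p * α ^ p with hS
  set g : ℝ → ℝ := fun α => S α / (t * α ^ m) - 1 with hg
  have hA := sum_tendsto m hm c
  rw [hc] at hA
  have hg1 : Tendsto (fun α => α * g α) atTop (nhds (c (m-1) / t)) := by
    have h := hA.div_const t
    refine h.congr' ?_
    filter_upwards [eventually_gt_atTop (0:ℝ)] with α hα
    have hαm : (α:ℝ) ^ m ≠ 0 := pow_ne_zero _ hα.ne'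
    simp only [hg]
    field_simp
    ring
  have hg0 : Tendsto g atTop (nhds 0) := by
    have h := hg1.mul tendsto_inv_atTop_zero
    rw [mul_zero] at h
    refine h.congr' ?_
    filter_upwards [eventually_gt_atTop (0:ℝ)] with α hα
    rw [mul_comm α (g α), mul_assoc, mul_inv_cancel₀ hα.ne', mul_one]
  have hfin := mul_log_one_add hg0 hg1
  refine hfin.congr fun α => ?_
  have h1 : 1 + g α = S α / (t * α ^ m) := by simp only [hg]; ring
  rw [h1]


private lemma gamma_tendsto (n : ℕ) (hn : 2 ≤ n) :
    Tendsto (fun α : ℝ => Real.log (Real.exp 1 + α ^ ((2:ℝ)/n)) / Real.log α) atTop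
      (nhds ((2:ℝ)/n)) := by
  have hn0 : (0:ℝ) < n := by positivity
  have hq : (0:ℝ) < 2/n := by positivity
  have h1 : Tendsto (fun α : ℝ => α ^ (-(2/(n:ℝ)))) atTop (nhds 0) := tendsto_rpow_neg_atTop hq
  have h2 : Tendsto (fun α : ℝ => Real.log (1 + Real.exp 1 * α ^ (-(2/(n:ℝ))))) atTop
      (nhds 0) := by
    have hc : Tendsto (fun α : ℝ => 1 + Real.exp 1 * α ^ (-(2/(n:ℝ)))) atTop
        (nhds (1 + Real.exp 1 * 0)) :=
      tendsto_const_nhds.add (tendsto_const_nhds.mul h1)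
    rw [mul_zero, add_zero] at hc
    have hlc : ContinuousAt Real.log 1 := Real.continuousAt_log one_ne_zero
    have := hlc.tendsto.comp hc
    rw [Real.log_one] at this
    exact this
  have h3 : Tendsto (fun α : ℝ => (Real.log α)⁻¹) atTop (nhds 0) :=
    tendsto_inv_atTop_zero.comp Real.tendsto_log_atTop
  have h4 := h2.mul h3
  rw [mul_zero] at h4
  have h5 := (tendsto_const_nhds (x := (2:ℝ)/n)).add h4
  rw [add_zero] at h5
  refine h5.congr' ?_
  filter_upwards [eventually_ge_atTop (2:ℝ)] with α hα
  have hα0 : (0:ℝ) < α := by linarith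
  have hlogα : 0 < Real.log α := Real.log_pos (by linarith)
  have hsplit : Real.exp 1 + α ^ ((2:ℝ)/n)
      = α ^ ((2:ℝ)/n) * (1 + Real.exp 1 * α ^ (-(2/(n:ℝ)))) := by
    have he : α ^ ((2:ℝ)/n) * (Real.exp 1 * α ^ (-(2/(n:ℝ)))) = Real.exp 1 := by
      rw [mul_comm (Real.exp 1), ← mul_assoc, ← Real.rpow_add hα0]
      simp
    rw [mul_add, mul_one, he, add_comm]
  rw [hsplit, Real.log_mul (by positivity) (by positivity), Real.log_rpow hα0]
  field_simp

/-- With the scaling `γ = ln(e + α^{2/n})` and weight transformation `w ↦ αw`,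
the logarithmic forest distance
`d_α(i,j) = γ(α−1) log_α (√(f_ii(α) f_jj(α)) / f_ij(α))` converges, as
`α → ∞`, to the resistance distance
`d^r(i,j) = (f_ii^{(n-2)} + f_jj^{(n-2)} − 2 f_ij^{(n-2)})/(n t)`.
Here `f i j p` is the total weight `f_ij^{(p)}` of spanning rooted forests with
`p` edges in which `i` is in the tree rooted at `j`; `f_ij^{(n-1)} = t > 0` is
the total spanning tree weight. -/
theorem stmt_14 (n : ℕ) (hn : 2 ≤ n) (t : ℝ) (ht : 0 < t)
    (f : Fin n → Fin n → ℕ → ℝ) (hnn : ∀ i j p, 0 ≤ f i j p)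
    (htop : ∀ i j, f i j (n - 1) = t) (i j : Fin n) :
    Tendsto (fun α : ℝ =>
        Real.log (Real.exp 1 + α ^ ((2 : ℝ) / n)) * (α - 1) *
          (Real.log (Real.sqrt ((∑ p ∈ Finset.range n, f i i p * α ^ p) *
              (∑ p ∈ Finset.range n, f j j p * α ^ p)) /
            (∑ p ∈ Finset.range n, f i j p * α ^ p)) / Real.log α))
      atTop
      (nhds ((f i i (n - 2) + f j j (n - 2) - 2 * f i j (n - 2)) / (n * t))) := by
  have hm : 1 ≤ n - 1 := by omega
  set m := n - 1 with hmdef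
  have hn2 : m + 1 = n := by omega
  have hm2 : m - 1 = n - 2 := by omega
  have tne : t ≠ 0 := ht.ne'
  have hii := pair_lemma m hm t ht (f i i) (htop i i)
  have hjj := pair_lemma m hm t ht (f j j) (htop j j)
  have hij := pair_lemma m hm t ht (f i j) (htop i j)
  rw [hn2, hm2] at hii hjj hij
  have hγ := gamma_tendsto n hn
  have hfrac : Tendsto (fun α : ℝ => (α - 1)/α) atTop (nhds 1) := by
    have h := (tendsto_const_nhds (x := (1:ℝ))).sub (tendsto_inv_atTop_zero (𝕜 := ℝ))
    rw [sub_zero] at h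
    refine h.congr' ?_
    filter_upwards [eventually_gt_atTop (0:ℝ)] with α hα
    field_simp
  have hcombo := ((hii.div_const 2).add (hjj.div_const 2)).sub hij
  have P := (hγ.mul hfrac).mul hcombo
  have hval : (2:ℝ)/n * 1 * (f i i (n-2) / t / 2 + f j j (n-2) / t / 2 - f i j (n-2) / t)
      = (f i i (n - 2) + f j j (n - 2) - 2 * f i j (n - 2)) / (n * t) := by
    have hn0 : ((n:ℝ)) ≠ 0 := by positivity
    field_simp
  rw [hval] at P
  refine P.congr' ?_
  filter_upwards [eventually_ge_atTop (2:ℝ)] with α hα2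
  have hα0 : (0:ℝ) < α := by linarith
  have hα1 : (1:ℝ) < α := by linarith
  have hlogα : 0 < Real.log α := Real.log_pos hα1
  have hSpos : ∀ k l : Fin n, 0 < ∑ p ∈ Finset.range n, f k l p * α ^ p := by
    intro k l
    rw [← hn2, Finset.sum_range_succ]
    have h1 : f k l m = t := htop k l
    have h2 : 0 ≤ ∑ p ∈ Finset.range m, f k l p * α ^ p :=
      Finset.sum_nonneg fun p _ => mul_nonneg (hnn k l p) (by positivity)
    have h3 : 0 < f k l m * α ^ m := by rw [h1]; positivity
    linarith
  have hlq : ∀ k l : Fin n,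
      Real.log ((∑ p ∈ Finset.range n, f k l p * α ^ p) / (t * α ^ m))
        = Real.log (∑ p ∈ Finset.range n, f k l p * α ^ p)
          - Real.log t - (m : ℝ) * Real.log α := by
    intro k l
    rw [Real.log_div (hSpos k l).ne' (by positivity),
      Real.log_mul tne (by positivity : (α:ℝ) ^ m ≠ 0), Real.log_pow]
    ring
  have hsqrt : Real.log (Real.sqrt ((∑ p ∈ Finset.range n, f i i p * α ^ p) *
        (∑ p ∈ Finset.range n, f j j p * α ^ p)) /
        (∑ p ∈ Finset.range n, f i j p * α ^ p))
      = (Real.log (∑ p ∈ Finset.range n, f i i p * α ^ p)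
          + Real.log (∑ p ∈ Finset.range n, f j j p * α ^ p)) / 2
        - Real.log (∑ p ∈ Finset.range n, f i j p * α ^ p) := by
    rw [Real.log_div (Real.sqrt_pos.mpr (mul_pos (hSpos i i) (hSpos j j))).ne' (hSpos i j).ne',
      Real.log_sqrt (mul_pos (hSpos i i) (hSpos j j)).le,
      Real.log_mul (hSpos i i).ne' (hSpos j j).ne']
  simp only [hlq, hsqrt]
  field_simp
  ring
end

section
/- With the scaling γ = ln(e + α^{2/n}) and weight transformation w ↦ αw, the logarithmic forest distance d_α(i,j) = γ(α−1) log_α (√(f_ii(α)f_jj(α)) / f_ij(α)) converges, as α → 0⁺, to the shortest-path distance d^s(i,j). -/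
open Filter Finset Topology

/-- With the scaling `γ = ln(e + α^{2/n})` and weight transformation `w ↦ αw`,
the logarithmic forest distance
`d_α(i,j) = γ(α−1) log_α (√(f_ii(α) f_jj(α)) / f_ij(α))` converges, as
`α → 0⁺`, to the shortest-path distance `m = d^s(i,j)`.  Here `f i j p` is
the forest coefficient `f_ij^{(p)} ≥ 0`, with `f_ij^{(p)} = 0` for `p < m`,
`f_ij^{(m)} > 0`, and `f_ii^{(0)} = f_jj^{(0)} = 1`. -/
theorem stmt_15 (n : ℕ) (hn : 2 ≤ n) (f : Fin n → Fin n → ℕ → ℝ)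
    (hnn : ∀ i j p, 0 ≤ f i j p) (i j : Fin n) (hij : i ≠ j)
    (m : ℕ) (hmn : m < n) (hlow : ∀ p, p < m → f i j p = 0)
    (hm : 0 < f i j m) (hii : f i i 0 = 1) (hjj : f j j 0 = 1) :
    Tendsto (fun α : ℝ =>
        Real.log (Real.exp 1 + α ^ ((2 : ℝ) / n)) * (α - 1) *
          (Real.log (Real.sqrt ((∑ p ∈ Finset.range n, f i i p * α ^ p) *
              (∑ p ∈ Finset.range n, f j j p * α ^ p)) /
            (∑ p ∈ Finset.range n, f i j p * α ^ p)) / Real.log α))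
      (nhdsWithin 0 (Set.Ioi 0)) (nhds (m : ℝ)) := by
  have hm0 : 0 < n - m := Nat.sub_pos_of_lt hmn
  set fm := f i j m with hfm
  set Sii : ℝ → ℝ := fun α => ∑ p ∈ Finset.range n, f i i p * α ^ p with hSiidef
  set Sjj : ℝ → ℝ := fun α => ∑ p ∈ Finset.range n, f j j p * α ^ p with hSjjdef
  set T : ℝ → ℝ := fun α => ∑ q ∈ Finset.range (n - m), f i j (m + q) * α ^ q with hTdef
  -- factorization of S_ij
  have hSij : ∀ α : ℝ, (∑ p ∈ Finset.range n, f i j p * α ^ p) = α ^ m * T α := by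
    intro α
    rw [Finset.range_eq_Ico, ← Finset.sum_Ico_consecutive _ (Nat.zero_le m) hmn.le]
    have h1 : ∑ p ∈ Finset.Ico 0 m, f i j p * α ^ p = 0 := by
      apply Finset.sum_eq_zero
      intro p hp
      rw [hlow p (Finset.mem_Ico.mp hp).2, zero_mul]
    rw [h1, zero_add, Finset.sum_Ico_eq_sum_range, Finset.mul_sum]
    apply Finset.sum_congr rfl
    intro q _
    rw [pow_add]; ring
  -- values at 0
  have hT0 : T 0 = fm := by
    show (∑ q ∈ Finset.range (n - m), f i j (m + q) * (0:ℝ) ^ q) = fm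
    rw [Finset.sum_eq_single 0]
    · simp [hfm]
    · intro q _ hq0; simp [zero_pow hq0]
    · intro h; exact absurd (Finset.mem_range.mpr hm0) h
  have hval : ∀ (g : ℕ → ℝ), g 0 = 1 → (∑ p ∈ Finset.range n, g p * (0:ℝ) ^ p) = 1 := by
    intro g hg
    rw [Finset.sum_eq_single 0]
    · simp [hg]
    · intro q _ hq0; simp [zero_pow hq0]
    · intro h; exact absurd (Finset.mem_range.mpr (by omega)) h
  have hSii0 : Sii 0 = 1 := hval _ hii
  have hSjj0 : Sjj 0 = 1 := hval _ hjj
  -- continuity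
  have hcont : ∀ (g : ℕ → ℝ) (N : ℕ), Continuous (fun α : ℝ => ∑ q ∈ Finset.range N, g q * α ^ q) := by
    intro g N
    exact continuous_finset_sum _ fun q _ => (continuous_const.mul (continuous_pow q))
  -- positivity
  have hTpos : ∀ α : ℝ, 0 < α → 0 < T α := by
    intro α hα
    have := Finset.single_le_sum
      (f := fun q => f i j (m + q) * α ^ q)
      (fun q _ => mul_nonneg (hnn i j _) (pow_nonneg hα.le q))
      (Finset.mem_range.mpr hm0)
    simp only [pow_zero, mul_one, Nat.add_zero] at this
    exact lt_of_lt_of_le hm this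
  have hSpos : ∀ (k : Fin n) (α : ℝ), f k k 0 = 1 → 0 < α → 0 < ∑ p ∈ Finset.range n, f k k p * α ^ p := by
    intro k α hk hα
    have := Finset.single_le_sum
      (f := fun p => f k k p * α ^ p)
      (fun p _ => mul_nonneg (hnn k k _) (pow_nonneg hα.le p))
      (Finset.mem_range.mpr (by omega : 0 < n))
    simp only [pow_zero, mul_one, hk] at this
    linarith
  -- limits of the building blocks
  have hlogSii : Tendsto (fun α => Real.log (Sii α)) (𝓝[>] (0:ℝ)) (𝓝 0) := by
    have h1 : Tendsto Sii (𝓝[>] (0:ℝ)) (𝓝 1) := by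
      have h2 : Tendsto Sii (𝓝 (0:ℝ)) (𝓝 (Sii 0)) := (hcont (f i i) n).tendsto 0
      rw [hSii0] at h2
      exact h2.mono_left nhdsWithin_le_nhds
    have := (Real.continuousAt_log one_ne_zero).tendsto.comp h1
    simpa [Function.comp_def] using this
  have hlogSjj : Tendsto (fun α => Real.log (Sjj α)) (𝓝[>] (0:ℝ)) (𝓝 0) := by
    have h1 : Tendsto Sjj (𝓝[>] (0:ℝ)) (𝓝 1) := by
      have h2 : Tendsto Sjj (𝓝 (0:ℝ)) (𝓝 (Sjj 0)) := (hcont (f j j) n).tendsto 0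
      rw [hSjj0] at h2
      exact h2.mono_left nhdsWithin_le_nhds
    have := (Real.continuousAt_log one_ne_zero).tendsto.comp h1
    simpa [Function.comp_def] using this
  have hlogT : Tendsto (fun α => Real.log (T α)) (𝓝[>] (0:ℝ)) (𝓝 (Real.log fm)) := by
    have h1 : Tendsto T (𝓝[>] (0:ℝ)) (𝓝 fm) := by
      have h2 : Tendsto T (𝓝 (0:ℝ)) (𝓝 (T 0)) := (hcont (fun q => f i j (m + q)) (n - m)).tendsto 0
      rw [hT0] at h2
      exact h2.mono_left nhdsWithin_le_nhds
    exact (Real.continuousAt_log hm.ne').tendsto.comp h1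
  have hinv : Tendsto (fun α : ℝ => (Real.log α)⁻¹) (𝓝[>] (0:ℝ)) (𝓝 0) := by
    have h1 : Tendsto (fun α : ℝ => -Real.log α) (𝓝[>] (0:ℝ)) atTop :=
      tendsto_neg_atBot_atTop.comp Real.tendsto_log_nhdsGT_zero
    have h2 := h1.inv_tendsto_atTop.neg
    rw [neg_zero] at h2
    refine h2.congr fun x => ?_
    simp [Pi.inv_apply, inv_neg]
  -- the second factor
  have hB : Tendsto (fun α : ℝ => ((Real.log (Sii α) + Real.log (Sjj α)) / 2 - Real.log (T α)) * (Real.log α)⁻¹ - m)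
      (𝓝[>] (0:ℝ)) (𝓝 (-(m:ℝ))) := by
    have hC : Tendsto (fun α : ℝ => ((Real.log (Sii α) + Real.log (Sjj α)) / 2 - Real.log (T α)))
        (𝓝[>] (0:ℝ)) (𝓝 (-Real.log fm)) := by
      have := ((hlogSii.add hlogSjj).div_const 2).sub hlogT
      simpa using this
    have := (hC.mul hinv).sub (tendsto_const_nhds (x := (m:ℝ)))
    simpa using this
  -- the first factor
  have hA : Tendsto (fun α : ℝ => Real.log (Real.exp 1 + α ^ ((2 : ℝ) / n)) * (α - 1))
      (𝓝[>] (0:ℝ)) (𝓝 (-1)) := by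
    have h2n : (0:ℝ) < 2 / n := by positivity
    have hr : Tendsto (fun α : ℝ => α ^ ((2:ℝ)/n)) (𝓝[>] (0:ℝ)) (𝓝 0) := by
      have := (Real.continuousAt_rpow_const 0 ((2:ℝ)/n) (Or.inr h2n.le)).tendsto
      rw [Real.zero_rpow h2n.ne'] at this
      exact this.mono_left nhdsWithin_le_nhds
    have hlog : Tendsto (fun α : ℝ => Real.log (Real.exp 1 + α ^ ((2:ℝ)/n))) (𝓝[>] (0:ℝ)) (𝓝 1) := by
      have hne : Real.exp 1 + 0 ≠ 0 := by positivity
      have := (Real.continuousAt_log hne).tendsto.comp (tendsto_const_nhds.add hr)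
      simpa [Real.log_exp, Function.comp_def] using this
    have hsub : Tendsto (fun α : ℝ => α - 1) (𝓝[>] (0:ℝ)) (𝓝 (-1)) := by
      have h2 : Tendsto (fun α : ℝ => α - 1) (𝓝 (0:ℝ)) (𝓝 ((0:ℝ) - 1)) :=
        (continuous_id.sub continuous_const).tendsto 0
      rw [zero_sub] at h2
      exact h2.mono_left nhdsWithin_le_nhds
    have := hlog.mul hsub
    simpa using this
  -- combine
  have hAB := hA.mul hB
  have hlim : Tendsto (fun α : ℝ =>
      Real.log (Real.exp 1 + α ^ ((2 : ℝ) / n)) * (α - 1) *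
        (((Real.log (Sii α) + Real.log (Sjj α)) / 2 - Real.log (T α)) * (Real.log α)⁻¹ - m))
      (𝓝[>] (0:ℝ)) (𝓝 (m:ℝ)) := by
    have : (-1 : ℝ) * (-(m:ℝ)) = m := by ring
    rwa [this] at hAB
  refine hlim.congr' ?_
  filter_upwards [Ioo_mem_nhdsGT_of_mem (by constructor <;> norm_num : (0:ℝ) ∈ Set.Ico 0 1)] with α hα
  obtain ⟨hα0, hα1⟩ := hα
  have hlogα : Real.log α < 0 := Real.log_neg hα0 hα1
  have hlogα' : Real.log α ≠ 0 := hlogα.ne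
  have hSiip : 0 < Sii α := hSpos i α hii hα0
  have hSjjp : 0 < Sjj α := hSpos j α hjj hα0
  have hTp : 0 < T α := hTpos α hα0
  have hSijp : 0 < α ^ m * T α := mul_pos (pow_pos hα0 m) hTp
  have hprod : 0 < Sii α * Sjj α := mul_pos hSiip hSjjp
  rw [hSij α]
  rw [Real.log_div (Real.sqrt_ne_zero'.mpr hprod) hSijp.ne',
    Real.log_sqrt hprod.le, Real.log_mul hSiip.ne' hSjjp.ne',
    Real.log_mul (pow_pos hα0 m).ne' hTp.ne', Real.log_pow]
  congr 1
  field_simp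
  ring
end
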